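/- arXiv:2603.09563 — 2 statements merged into one kernel-verified Lean document; each statement's English description precedes it below -/
import Mathlib

section
/- Let D and D'' be two DAGs with the same path skeleton v1 — v2 — ... — vn (n ≥ 3) that are not Markov equivalent. Then the d-separation distance between D and D'' is at least 2^(n-1) - 2. -/
/-- A directed graph on `Fin n` is a binary relation; it is a DAG when it has no
directed cycle. -/
def IsDAG {n : ℕ} (D : Fin n → Fin n → Prop) : Prop :=
  ∀ v, ¬ Relation.TransGen D v v

/-- The skeleton (underlying undirected graph) of a directed graph. -/
def Skel {n : ℕ} (D : Fin n → Fin n → Prop) : SimpleGraph (Fin n) where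
  Adj a b := a ≠ b ∧ (D a b ∨ D b a)
  symm := ⟨fun a b h => ⟨h.1.symm, h.2.symm⟩⟩
  loopless := ⟨fun a h => h.1 rfl⟩

/-- `y` is a descendant of `x` (including `x` itself). -/
def Desc {n : ℕ} (D : Fin n → Fin n → Prop) (x y : Fin n) : Prop :=
  Relation.ReflTransGen D x y

/-- A path (in the skeleton) from `u` to `v`, as a list of distinct vertices with
consecutive vertices adjacent in the skeleton. -/
def IsSkelPath {n : ℕ} (D : Fin n → Fin n → Prop) (u v : Fin n) (p : List (Fin n)) : Prop :=
  p.Nodup ∧ p.head? = some u ∧ p.getLast? = some v ∧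
    p.Chain' (fun a b => D a b ∨ D b a)

/-- Position `i` of the list `p` is a collider: both neighboring arcs point into it. -/
def ColliderAt {n : ℕ} [NeZero n] (D : Fin n → Fin n → Prop) (p : List (Fin n)) (i : ℕ) : Prop :=
  D (p.getD (i - 1) default) (p.getD i default) ∧ D (p.getD (i + 1) default) (p.getD i default)

/-- The path `p` is blocked by `Z`: some internal position is a non-collider in `Z`,
or a collider none of whose descendants (including itself) lies in `Z`. -/
def Blocked {n : ℕ} [NeZero n] (D : Fin n → Fin n → Prop) (Z : Finset (Fin n))
    (p : List (Fin n)) : Prop :=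
  ∃ i : ℕ, 0 < i ∧ i + 1 < p.length ∧
    ((¬ ColliderAt D p i ∧ p.getD i default ∈ Z) ∨
      (ColliderAt D p i ∧ ∀ w, Desc D (p.getD i default) w → w ∉ Z))

/-- `u` and `v` are d-separated given `Z` in `D`. -/
def DSep {n : ℕ} [NeZero n] (D : Fin n → Fin n → Prop) (u v : Fin n)
    (Z : Finset (Fin n)) : Prop :=
  ∀ p : List (Fin n), IsSkelPath D u v p → Blocked D Z p

/-- The d-separation distance between two directed graphs on `Fin n`: the number of
triples `(u, v, Z)` with `u < v` and `Z ⊆ V \ {u, v}` on which their d-separation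
relations differ. -/
noncomputable def dSepDist {n : ℕ} [NeZero n] (D₁ D₂ : Fin n → Fin n → Prop) : ℕ :=
  Set.ncard {t : Fin n × Fin n × Finset (Fin n) |
    t.1 < t.2.1 ∧ t.1 ∉ t.2.2 ∧ t.2.1 ∉ t.2.2 ∧
    ¬ (DSep D₁ t.1 t.2.1 t.2.2 ↔ DSep D₂ t.1 t.2.1 t.2.2)}

/-- A vertex is a collider (of a DAG with a path skeleton) if it has two distinct
parents. -/
def IsColliderVertex {n : ℕ} (D : Fin n → Fin n → Prop) (k : Fin n) : Prop :=
  ∃ a b, a ≠ b ∧ D a k ∧ D b k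

/-- Two directed graphs entail the same d-separation relations. -/
def MarkovEquiv {n : ℕ} [NeZero n] (D₁ D₂ : Fin n → Fin n → Prop) : Prop :=
  ∀ (u v : Fin n) (Z : Finset (Fin n)), u ≠ v → u ∉ Z → v ∉ Z →
    (DSep D₁ u v Z ↔ DSep D₂ u v Z)



section Basic
variable {n : ℕ} {D : Fin n → Fin n → Prop}

lemma skel_adj (hs : Skel D = SimpleGraph.pathGraph n) (a b : Fin n) :
    (a ≠ b ∧ (D a b ∨ D b a)) ↔ ((a : ℕ) + 1 = b ∨ (b : ℕ) + 1 = a) := by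
  have : (Skel D).Adj a b ↔ (SimpleGraph.pathGraph n).Adj a b := by rw [hs]
  rw [SimpleGraph.pathGraph_adj] at this
  exact this

lemma D_ne (hD : IsDAG D) {a b : Fin n} (h : D a b) : a ≠ b := by
  rintro rfl; exact hD a (Relation.TransGen.single h)

lemma D_not_both (hD : IsDAG D) {a b : Fin n} (h : D a b) (h' : D b a) : False :=
  hD a (Relation.TransGen.head h (Relation.TransGen.single h'))

lemma D_adj (hD : IsDAG D) (hs : Skel D = SimpleGraph.pathGraph n) {a b : Fin n}
    (h : D a b) : (a : ℕ) + 1 = b ∨ (b : ℕ) + 1 = a :=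
  (skel_adj hs a b).mp ⟨D_ne hD h, Or.inl h⟩

lemma orient (hs : Skel D = SimpleGraph.pathGraph n) {a b : Fin n}
    (h : (a : ℕ) + 1 = b) : D a b ∨ D b a :=
  ((skel_adj hs a b).mpr (Or.inl h)).2

lemma parent_class (hD : IsDAG D) (hs : Skel D = SimpleGraph.pathGraph n)
    {k a b x : Fin n} (ha : (a : ℕ) + 1 = k) (hb : (k : ℕ) + 1 = b)
    (hx : D x k ∨ D k x) : x = a ∨ x = b := by
  have h := hx.elim (D_adj hD hs) (fun h => (D_adj hD hs h).symm)
  rcases h with h | h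
  · left; exact Fin.ext (by omega)
  · right; exact Fin.ext (by omega)

lemma colliderVertex_iff (hD : IsDAG D) (hs : Skel D = SimpleGraph.pathGraph n)
    {k a b : Fin n} (ha : (a : ℕ) + 1 = k) (hb : (k : ℕ) + 1 = b) :
    IsColliderVertex D k ↔ D a k ∧ D b k := by
  constructor
  · rintro ⟨x, y, hxy, hx, hy⟩
    rcases parent_class hD hs ha hb (Or.inl hx) with rfl | rfl <;>
      rcases parent_class hD hs ha hb (Or.inl hy) with rfl | rfl
    · exact absurd rfl hxy
    · exact ⟨hx, hy⟩
    · exact ⟨hy, hx⟩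
    · exact absurd rfl hxy
  · rintro ⟨h1, h2⟩
    exact ⟨a, b, fun h => by subst h; omega, h1, h2⟩

lemma not_collider_bot (hD : IsDAG D) (hs : Skel D = SimpleGraph.pathGraph n)
    {k : Fin n} (hk : (k : ℕ) = 0) : ¬ IsColliderVertex D k := by
  rintro ⟨x, y, hxy, hx, hy⟩
  have h1 := D_adj hD hs hx
  have h2 := D_adj hD hs hy
  exact hxy (Fin.ext (by omega))

lemma not_collider_top (hD : IsDAG D) (hs : Skel D = SimpleGraph.pathGraph n)
    {k : Fin n} (hk : (k : ℕ) + 1 = n) : ¬ IsColliderVertex D k := by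
  rintro ⟨x, y, hxy, hx, hy⟩
  have h1 := D_adj hD hs hx
  have h2 := D_adj hD hs hy
  have hxn := x.isLt
  have hyn := y.isLt
  exact hxy (Fin.ext (by omega))

lemma collider_no_desc (hD : IsDAG D) (hs : Skel D = SimpleGraph.pathGraph n)
    {k a b : Fin n} (ha : (a : ℕ) + 1 = k) (hb : (k : ℕ) + 1 = b)
    (h1 : D a k) (h2 : D b k) : ∀ w, Desc D k w → w = k := by
  have hout : ∀ w, ¬ D k w := by
    intro w hw
    rcases parent_class hD hs ha hb (Or.inr hw) with rfl | rfl
    · exact D_not_both hD h1 hw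
    · exact D_not_both hD h2 hw
  intro w hw
  rcases Relation.reflTransGen_iff_eq_or_transGen.mp hw with h | h
  · exact h
  · obtain ⟨x, hx, -⟩ := Relation.TransGen.head'_iff.mp h
    exact absurd hx (hout _)

end Basic
section Paths
variable {n : ℕ} {D : Fin n → Fin n → Prop}

lemma chain_mono (hD : IsDAG D) (hs : Skel D = SimpleGraph.pathGraph n) :
    ∀ (p : List (Fin n)), p.Nodup → p.Chain' (fun a b => D a b ∨ D b a) →
      p.Chain' (fun a b : Fin n => (a : ℕ) + 1 = b) ∨
      p.Chain' (fun a b : Fin n => (b : ℕ) + 1 = a) := by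
  intro p
  induction p with
  | nil => intro _ _; left; exact List.isChain_nil
  | cons x q ih =>
    intro hnd hch
    match q with
    | [] => left; exact List.isChain_singleton _
    | y :: rest =>
      have hxy : (x : ℕ) + 1 = y ∨ (y : ℕ) + 1 = x := by
        have := (List.isChain_cons_cons.mp hch).1
        exact this.elim (D_adj hD hs) (fun h => (D_adj hD hs h).symm)
      have hnd' : (y :: rest).Nodup := hnd.of_cons
      have hch' := (List.isChain_cons_cons.mp hch).2
      rcases ih hnd' hch' with hinc | hdec
      · rcases hxy with h | h
        · left; exact List.isChain_cons_cons.mpr ⟨h, hinc⟩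
        · match rest with
          | [] => right; exact List.isChain_cons_cons.mpr ⟨h, List.isChain_singleton _⟩
          | z :: t =>
            exfalso
            have hyz : (y : ℕ) + 1 = z := (List.isChain_cons_cons.mp hinc).1
            have : x = z := Fin.ext (by omega)
            have : x ∈ y :: z :: t := by rw [this]; simp
            exact (List.nodup_cons.mp hnd).1 this
      · rcases hxy with h | h
        · match rest with
          | [] => left; exact List.isChain_cons_cons.mpr ⟨h, List.isChain_singleton _⟩
          | z :: t =>
            exfalso
            have hyz : (z : ℕ) + 1 = y := (List.isChain_cons_cons.mp hdec).1
            have : x = z := Fin.ext (by omega)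
            have : x ∈ y :: z :: t := by rw [this]; simp
            exact (List.nodup_cons.mp hnd).1 this
        · right; exact List.isChain_cons_cons.mpr ⟨h, hdec⟩

lemma chain_inc_get {p : List (Fin n)} (h : p.Chain' (fun a b : Fin n => (a : ℕ) + 1 = b)) :
    ∀ i (hi : i < p.length) (h0 : 0 < p.length),
      ((p.get ⟨i, hi⟩ : Fin n) : ℕ) = (p.get ⟨0, h0⟩ : ℕ) + i := by
  have hg := List.isChain_iff_getElem.mp h
  intro i
  induction i with
  | zero => intro hi h0; rfl
  | succ j ihj =>
    intro hi h0
    have hj : j < p.length := by omega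
    have := hg j (by omega)
    have := ihj hj h0
    simp only [List.get_eq_getElem] at *; omega

lemma chain_dec_get {p : List (Fin n)} (h : p.Chain' (fun a b : Fin n => (b : ℕ) + 1 = a)) :
    ∀ i (hi : i < p.length) (h0 : 0 < p.length),
      ((p.get ⟨i, hi⟩ : Fin n) : ℕ) + i = (p.get ⟨0, h0⟩ : ℕ) := by
  have hg := List.isChain_iff_getElem.mp h
  intro i
  induction i with
  | zero => intro hi h0; rfl
  | succ j ihj =>
    intro hi h0
    have hj : j < p.length := by omega
    have := hg j (by omega)
    have := ihj hj h0
    simp only [List.get_eq_getElem] at *; omega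

end Paths
section Spec
variable {n : ℕ} [NeZero n] {D : Fin n → Fin n → Prop}

lemma length_pos_of_skelPath {u v : Fin n} {p : List (Fin n)} (hp : IsSkelPath D u v p) :
    0 < p.length := by
  cases p with
  | nil => simp [IsSkelPath] at hp
  | cons a q => simp

lemma get_zero_of_skelPath {u v : Fin n} {p : List (Fin n)} (hp : IsSkelPath D u v p)
    (h0 : 0 < p.length) : p.get ⟨0, h0⟩ = u := by
  cases p with
  | nil => simp at h0
  | cons a q =>
    have := hp.2.1
    simp at this
    simp [this]

lemma get_last_of_skelPath {u v : Fin n} {p : List (Fin n)} (hp : IsSkelPath D u v p)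
    (h0 : 0 < p.length) : p.get ⟨p.length - 1, by omega⟩ = v := by
  have hl := hp.2.2.1
  rw [List.getLast?_eq_getElem?] at hl
  have h2 : p[p.length - 1]? = some (p.get ⟨p.length - 1, by omega⟩) := by
    rw [List.getElem?_eq_getElem (by omega)]
    simp
  rw [h2] at hl
  exact (Option.some_inj.mp hl)

lemma skelPath_spec (hD : IsDAG D) (hs : Skel D = SimpleGraph.pathGraph n)
    {u v : Fin n} {p : List (Fin n)} (hp : IsSkelPath D u v p) (huv : (u : ℕ) < v) :
    p.length = (v : ℕ) - u + 1 ∧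
      ∀ i, i < p.length → ((p.getD i default : Fin n) : ℕ) = u + i := by
  obtain ⟨hnd, hh, hl, hch⟩ := hp
  have h0 : 0 < p.length := length_pos_of_skelPath ⟨hnd, hh, hl, hch⟩
  have hg0 : p.get ⟨0, h0⟩ = u := get_zero_of_skelPath ⟨hnd, hh, hl, hch⟩ h0
  have hgl : p.get ⟨p.length - 1, by omega⟩ = v := get_last_of_skelPath ⟨hnd, hh, hl, hch⟩ h0
  rcases chain_mono hD hs p hnd hch with hinc | hdec
  · have hlen : (v : ℕ) = (u : ℕ) + (p.length - 1) := by
      have := chain_inc_get hinc (p.length - 1) (by omega) h0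
      rw [hg0, hgl] at this
      exact this
    constructor
    · omega
    · intro i hi
      rw [List.getD_eq_get (i := ⟨i, hi⟩)]
      have := chain_inc_get hinc i hi h0
      rw [hg0] at this
      exact this
  · exfalso
    have := chain_dec_get hdec (p.length - 1) (by omega) h0
    rw [hg0, hgl] at this
    omega

lemma skelPath_exists_aux (hD : IsDAG D) (hs : Skel D = SimpleGraph.pathGraph n) :
    ∀ m (u v : Fin n), (v : ℕ) = (u : ℕ) + m + 1 → ∃ p, IsSkelPath D u v p := by
  intro m
  induction m with
  | zero =>
    intro u v h
    have hne : u ≠ v := fun he => by subst he; omega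
    refine ⟨[u, v], ?_, rfl, rfl, ?_⟩
    · simp [hne]
    · exact List.isChain_pair.mpr (orient hs (by omega))
  | succ m ih =>
    intro u v h
    have hvn : (v : ℕ) - 1 < n := by omega
    set v' : Fin n := ⟨(v : ℕ) - 1, hvn⟩ with hv'
    have hv'val : (v' : ℕ) = (u : ℕ) + m + 1 := by simp [hv']; omega
    obtain ⟨p, hp⟩ := ih u v' hv'val
    have hspec := skelPath_spec hD hs hp (by omega)
    have hvp : v ∉ p := by
      intro hmem
      obtain ⟨⟨i, hi⟩, rfl⟩ := List.mem_iff_get.mp hmem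
      have := hspec.2 i hi
      rw [List.getD_eq_get (i := ⟨i, hi⟩)] at this
      omega
    refine ⟨p ++ [v], ?_, ?_, ?_, ?_⟩
    · rw [List.nodup_append]
      exact ⟨hp.1, List.nodup_singleton v, by intro a ha b hb hab; rw [List.mem_singleton] at hb; rw [hab, hb] at ha; exact hvp ha⟩
    · rw [List.head?_append, hp.2.1]; rfl
    · exact List.getLast?_concat
    · refine (hp.2.2.2).append (List.isChain_singleton v) ?_
      intro x hx y hy
      rw [hp.2.2.1] at hx
      simp at hx hy
      subst hx; subst hy
      exact orient hs (by simp [hv']; omega)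

lemma skelPath_exists (hD : IsDAG D) (hs : Skel D = SimpleGraph.pathGraph n)
    {u v : Fin n} (huv : (u : ℕ) < v) : ∃ p, IsSkelPath D u v p :=
  skelPath_exists_aux hD hs ((v : ℕ) - u - 1) u v (by omega)

end Spec
section Char
variable {n : ℕ} [NeZero n] {D : Fin n → Fin n → Prop}

lemma dsep_iff (hD : IsDAG D) (hs : Skel D = SimpleGraph.pathGraph n)
    {u v : Fin n} (huv : (u : ℕ) < v) (Z : Finset (Fin n)) :
    DSep D u v Z ↔ ∃ k : Fin n, (u : ℕ) < k ∧ (k : ℕ) < v ∧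
      ((¬ IsColliderVertex D k ∧ k ∈ Z) ∨ (IsColliderVertex D k ∧ k ∉ Z)) := by
  constructor
  · intro hds
    by_contra hne
    push_neg at hne
    obtain ⟨p, hp⟩ := skelPath_exists hD hs huv
    obtain ⟨hlen, hval⟩ := skelPath_spec hD hs hp huv
    obtain ⟨i, hi0, hi1, hcase⟩ := hds p hp
    set k := p.getD i default with hk
    have hkv : (k : ℕ) = u + i := hval i (by omega)
    have hk1 : (u : ℕ) < k := by omega
    have hk2 : (k : ℕ) < v := by omega
    have hprev : ((p.getD (i - 1) default : Fin n) : ℕ) + 1 = k := by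
      have := hval (i - 1) (by omega); omega
    have hnext : ((k : ℕ)) + 1 = (p.getD (i + 1) default : ℕ) := by
      have := hval (i + 1) (by omega); omega
    have hcoll : ColliderAt D p i ↔ IsColliderVertex D k := by
      unfold ColliderAt
      exact (colliderVertex_iff hD hs hprev hnext).symm
    obtain ⟨h1, h2⟩ := hne k hk1 hk2
    rcases hcase with ⟨hnc, hmem⟩ | ⟨hc, hdesc⟩
    · have : IsColliderVertex D k := by_contra fun hcon => (h1 hcon) hmem
      exact hnc (hcoll.mpr this)
    · exact hdesc k Relation.ReflTransGen.refl (h2 (hcoll.mp hc))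
  · rintro ⟨k, hk1, hk2, hcase⟩ p hp
    obtain ⟨hlen, hval⟩ := skelPath_spec hD hs hp huv
    refine ⟨(k : ℕ) - u, by omega, by omega, ?_⟩
    set i := (k : ℕ) - (u : ℕ) with hi
    have hival : ((p.getD i default : Fin n) : ℕ) = k := by
      rw [hval i (by omega)]; omega
    have hgi : p.getD i default = k := Fin.ext hival
    have hprev : ((p.getD (i - 1) default : Fin n) : ℕ) + 1 = k := by
      have := hval (i - 1) (by omega); omega
    have hnext : ((k : ℕ)) + 1 = (p.getD (i + 1) default : ℕ) := by
      have := hval (i + 1) (by omega); omega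
    have hcoll : ColliderAt D p i ↔ IsColliderVertex D k := by
      unfold ColliderAt
      rw [hgi]
      exact (colliderVertex_iff hD hs hprev hnext).symm
    rcases hcase with ⟨hnc, hmem⟩ | ⟨hc, hnm⟩
    · left; exact ⟨fun h => hnc (hcoll.mp h), by rw [hgi]; exact hmem⟩
    · right
      refine ⟨hcoll.mpr hc, ?_⟩
      rw [hgi]
      obtain ⟨hpk, hnk⟩ := (colliderVertex_iff hD hs hprev hnext).mp hc
      intro w hw
      rw [collider_no_desc hD hs hprev hnext hpk hnk w hw]
      exact hnm

lemma isSkelPath_reverse {u v : Fin n} {p : List (Fin n)} (hp : IsSkelPath D u v p) :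
    IsSkelPath D v u p.reverse := by
  obtain ⟨hnd, hh, hl, hch⟩ := hp
  refine ⟨List.nodup_reverse.mpr hnd, ?_, ?_, ?_⟩
  · rw [List.head?_reverse]; exact hl
  · rw [List.getLast?_reverse]; exact hh
  · apply List.isChain_reverse.mpr
    exact List.IsChain.imp (fun a b h => h.symm) hch

lemma getD_reverse {p : List (Fin n)} {i : ℕ} (hi : i < p.length) :
    p.reverse.getD i default = p.getD (p.length - 1 - i) default := by
  rw [List.getD_eq_getElem _ _ (by simpa using hi), List.getD_eq_getElem _ _ (by omega)]
  rw [List.getElem_reverse]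

lemma blocked_reverse {Z : Finset (Fin n)} {p : List (Fin n)} (hb : Blocked D Z p) :
    Blocked D Z p.reverse := by
  obtain ⟨i, hi0, hi1, hcase⟩ := hb
  have hL : p.reverse.length = p.length := List.length_reverse
  refine ⟨p.length - 1 - i, by omega, by omega, ?_⟩
  set j := p.length - 1 - i with hj
  have e1 : p.reverse.getD j default = p.getD i default := by
    rw [getD_reverse (by omega)]; congr 1; omega
  have e2 : p.reverse.getD (j - 1) default = p.getD (i + 1) default := by
    rw [getD_reverse (by omega)]; congr 1; omega
  have e3 : p.reverse.getD (j + 1) default = p.getD (i - 1) default := by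
    rw [getD_reverse (by omega)]; congr 1; omega
  have hca : ColliderAt D p.reverse j ↔ ColliderAt D p i := by
    unfold ColliderAt; rw [e1, e2, e3]; exact and_comm
  rcases hcase with ⟨h1, h2⟩ | ⟨h1, h2⟩
  · left; exact ⟨fun h => h1 (hca.mp h), by rw [e1]; exact h2⟩
  · right; exact ⟨hca.mpr h1, by rw [e1]; exact h2⟩

lemma dsep_comm {u v : Fin n} {Z : Finset (Fin n)} : DSep D u v Z ↔ DSep D v u Z := by
  constructor <;>
  · intro h p hp
    have h2 := blocked_reverse (h p.reverse (isSkelPath_reverse hp))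
    rwa [List.reverse_reverse] at h2

lemma markov_of_same_colliders {D'' : Fin n → Fin n → Prop}
    (hD : IsDAG D) (hs : Skel D = SimpleGraph.pathGraph n)
    (hD'' : IsDAG D'') (hs'' : Skel D'' = SimpleGraph.pathGraph n)
    (hcoll : ∀ k, IsColliderVertex D k ↔ IsColliderVertex D'' k) :
    MarkovEquiv D D'' := by
  intro u v Z hne _ _
  rcases Nat.lt_trichotomy (u : ℕ) (v : ℕ) with h | h | h
  · rw [dsep_iff hD hs h Z, dsep_iff hD'' hs'' h Z]
    simp_rw [hcoll]
  · exact absurd (Fin.ext h) hne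
  · rw [dsep_comm (D := D), dsep_comm (D := D''),
      dsep_iff hD hs h Z, dsep_iff hD'' hs'' h Z]
    simp_rw [hcoll]

end Char
open Classical in
noncomputable def collSet {n : ℕ} (D : Fin n → Fin n → Prop) (a b : Fin n) : Finset (Fin n) :=
  Finset.univ.filter (fun k => (a : ℕ) < k ∧ (k : ℕ) < b ∧ IsColliderVertex D k)

section Count
variable {n : ℕ} [NeZero n]

lemma mem_collSet {D : Fin n → Fin n → Prop} {a b k : Fin n} :
    k ∈ collSet D a b ↔ (a : ℕ) < k ∧ (k : ℕ) < b ∧ IsColliderVertex D k := by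
  simp [collSet]

lemma collSet_subset_Icc {D : Fin n → Fin n → Prop} {a b : Fin n} :
    collSet D a b ⊆ Finset.Icc a b := by
  intro k hk
  rw [mem_collSet] at hk
  rw [Finset.mem_Icc]
  exact ⟨Fin.le_def.mpr (by omega), Fin.le_def.mpr (by omega)⟩

lemma memZ_iff {D : Fin n → Fin n → Prop} {a b k : Fin n} {W : Finset (Fin n)}
    (hW : W ⊆ (Finset.Icc a b)ᶜ) (h1 : (a : ℕ) < k) (h2 : (k : ℕ) < b) :
    (k ∈ W ∪ collSet D a b) ↔ IsColliderVertex D k := by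
  have hkIcc : k ∈ Finset.Icc a b :=
    Finset.mem_Icc.mpr ⟨Fin.le_def.mpr (by omega), Fin.le_def.mpr (by omega)⟩
  have hkW : k ∉ W := fun hkW => (Finset.mem_compl.mp (hW hkW)) hkIcc
  simp [Finset.mem_union, hkW, mem_collSet, h1, h2]

lemma key_pair {D₁ D₂ : Fin n → Fin n → Prop}
    (hD₁ : IsDAG D₁) (hs₁ : Skel D₁ = SimpleGraph.pathGraph n)
    (hD₂ : IsDAG D₂) (hs₂ : Skel D₂ = SimpleGraph.pathGraph n)
    {a b c : Fin n} (hac : (a : ℕ) < c) (hcb : (c : ℕ) < b)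
    (hcdiff : ¬ (IsColliderVertex D₁ c ↔ IsColliderVertex D₂ c))
    {W : Finset (Fin n)} (hW : W ⊆ (Finset.Icc a b)ᶜ) :
    ¬ DSep D₁ a b (W ∪ collSet D₁ a b) ∧ DSep D₂ a b (W ∪ collSet D₁ a b) := by
  have hab : (a : ℕ) < b := by omega
  constructor
  · rw [dsep_iff hD₁ hs₁ hab]
    rintro ⟨k, h1, h2, hcase⟩
    have hmem := memZ_iff (D := D₁) hW h1 h2
    rcases hcase with ⟨hnc, hm⟩ | ⟨hcl, hnm⟩
    · exact hnc (hmem.mp hm)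
    · exact hnm (hmem.mpr hcl)
  · rw [dsep_iff hD₂ hs₂ hab]
    refine ⟨c, hac, hcb, ?_⟩
    have hmem := memZ_iff (D := D₁) hW hac hcb
    by_cases h2 : IsColliderVertex D₂ c
    · exact Or.inr ⟨h2, fun hcm => hcdiff (iff_of_true (hmem.mp hcm) h2)⟩
    · refine Or.inl ⟨h2, ?_⟩
      have h1 : IsColliderVertex D₁ c := by
        by_contra h1; exact hcdiff (iff_of_false h1 h2)
      exact hmem.mpr h1

lemma sum_two_pow (m : ℕ) : ∑ i ∈ Finset.range m, 2 ^ i = 2 ^ m - 1 := by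
  induction m with
  | zero => rfl
  | succ k ih =>
    rw [Finset.sum_range_succ, ih, pow_succ]
    have := Nat.one_le_two_pow (n := k)
    omega

lemma sum_Iio_pow (c : Fin n) : ∑ a ∈ Finset.Iio c, 2 ^ (a : ℕ) = 2 ^ (c : ℕ) - 1 := by
  rw [← sum_two_pow]
  refine Finset.sum_bij' (fun a _ => (a : ℕ))
    (fun i hi => (⟨i, lt_trans (Finset.mem_range.mp hi) c.isLt⟩ : Fin n)) ?_ ?_ ?_ ?_ ?_
  · intro a ha
    exact Finset.mem_range.mpr (Fin.lt_def.mp (Finset.mem_Iio.mp ha))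
  · intro i hi
    exact Finset.mem_Iio.mpr (Fin.lt_def.mpr (Finset.mem_range.mp hi))
  · intro a ha; exact Fin.ext rfl
  · intro i hi; rfl
  · intro a ha; rfl

lemma sum_Ioi_pow (c : Fin n) :
    ∑ b ∈ Finset.Ioi c, 2 ^ (n - 1 - (b : ℕ)) = 2 ^ (n - 1 - (c : ℕ)) - 1 := by
  have hn : 0 < n := Nat.pos_of_ne_zero (NeZero.ne n)
  rw [← sum_two_pow]
  refine Finset.sum_bij' (fun b _ => n - 1 - (b : ℕ))
    (fun i hi => (⟨n - 1 - i, by omega⟩ : Fin n)) ?_ ?_ ?_ ?_ ?_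
  · intro b hb
    have h1 := Fin.lt_def.mp (Finset.mem_Ioi.mp hb)
    have h2 := b.isLt
    refine Finset.mem_range.mpr ?_
    show n - 1 - (b : ℕ) < n - 1 - (c : ℕ)
    omega
  · intro i hi
    have h1 := Finset.mem_range.mp hi
    have h2 := c.isLt
    exact Finset.mem_Ioi.mpr (Fin.lt_def.mpr (by show (c : ℕ) < n - 1 - i; omega))
  · intro b hb
    have h1 := Fin.lt_def.mp (Finset.mem_Ioi.mp hb)
    have h2 := b.isLt
    apply Fin.ext
    show n - 1 - (n - 1 - (b : ℕ)) = (b : ℕ)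
    omega
  · intro i hi
    have h1 := Finset.mem_range.mp hi
    show n - 1 - (n - 1 - i) = i
    omega
  · intro b hb; rfl

end Count

theorem same_path_skeleton_not_equiv_far {n : ℕ} [NeZero n] (hn : 3 ≤ n)
    (D D'' : Fin n → Fin n → Prop) (hD : IsDAG D) (hD'' : IsDAG D'')
    (hs : Skel D = SimpleGraph.pathGraph n) (hs'' : Skel D'' = SimpleGraph.pathGraph n)
    (hne : ¬ MarkovEquiv D D'') :
    2 ^ (n - 1) - 2 ≤ dSepDist D D'' := by
  classical
  obtain ⟨c, hc⟩ : ∃ c : Fin n, ¬ (IsColliderVertex D c ↔ IsColliderVertex D'' c) := by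
    by_contra h
    simp only [not_exists, not_not] at h
    exact hne (markov_of_same_colliders hD hs hD'' hs'' h)
  have hc0 : 0 < (c : ℕ) := by
    rcases Nat.eq_zero_or_pos (c : ℕ) with h | h
    · exact absurd (iff_of_false (not_collider_bot hD hs h) (not_collider_bot hD'' hs'' h)) hc
    · exact h
  have hc1 : (c : ℕ) + 1 < n := by
    rcases eq_or_lt_of_le (Nat.succ_le_of_lt c.isLt) with h | h
    · exact absurd (iff_of_false (not_collider_top hD hs h) (not_collider_top hD'' hs'' h)) hc
    · exact h
  set S : Set (Fin n × Fin n × Finset (Fin n)) :=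
    {t : Fin n × Fin n × Finset (Fin n) |
      t.1 < t.2.1 ∧ t.1 ∉ t.2.2 ∧ t.2.1 ∉ t.2.2 ∧
      ¬ (DSep D t.1 t.2.1 t.2.2 ↔ DSep D'' t.1 t.2.1 t.2.2)} with hS
  have hdist : dSepDist D D'' = S.ncard := rfl
  set Q : Finset (Bool × Fin n × Fin n) :=
    (Finset.univ : Finset Bool) ×ˢ (Finset.Iio c ×ˢ Finset.Ioi c) with hQ
  set X : Finset ((_ : Bool × Fin n × Fin n) × Finset (Fin n)) :=
    Q.sigma (fun q => ((Finset.Icc q.2.1 q.2.2)ᶜ).powerset) with hX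
  set ψ : ((_ : Bool × Fin n × Fin n) × Finset (Fin n)) → Fin n × Fin n × Finset (Fin n) :=
    fun x => (x.1.2.1, x.1.2.2, x.2 ∪ collSet (cond x.1.1 D D'') x.1.2.1 x.1.2.2) with hψ
  have hmemX : ∀ x ∈ X, ((x.1.2.1 : ℕ) < c ∧ (c : ℕ) < x.1.2.2) ∧
      x.2 ⊆ (Finset.Icc x.1.2.1 x.1.2.2)ᶜ := by
    intro x hx
    rw [hX, Finset.mem_sigma] at hx
    obtain ⟨hq, hw⟩ := hx
    rw [hQ, Finset.mem_product] at hq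
    obtain ⟨-, hq2⟩ := hq
    rw [Finset.mem_product] at hq2
    exact ⟨⟨Fin.lt_def.mp (Finset.mem_Iio.mp hq2.1), Fin.lt_def.mp (Finset.mem_Ioi.mp hq2.2)⟩,
      Finset.mem_powerset.mp hw⟩
  have himg : ∀ x ∈ X, ψ x ∈ S := by
    rintro ⟨⟨ε, a, b⟩, W⟩ hx
    have h1 : (a : ℕ) < (c : ℕ) := (hmemX _ hx).1.1
    have h2 : (c : ℕ) < (b : ℕ) := (hmemX _ hx).1.2
    have h3 : W ⊆ (Finset.Icc a b)ᶜ := (hmemX _ hx).2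
    have hab : (a : ℕ) < b := by omega
    have haZ : a ∉ W ∪ collSet (cond ε D D'') a b := by
      rw [Finset.mem_union]
      rintro (h | h)
      · exact (Finset.mem_compl.mp (h3 h))
          (Finset.mem_Icc.mpr ⟨le_refl a, Fin.le_def.mpr (by omega)⟩)
      · have := mem_collSet.mp h; omega
    have hbZ : b ∉ W ∪ collSet (cond ε D D'') a b := by
      rw [Finset.mem_union]
      rintro (h | h)
      · exact (Finset.mem_compl.mp (h3 h))
          (Finset.mem_Icc.mpr ⟨Fin.le_def.mpr (by omega), le_refl b⟩)
      · have := mem_collSet.mp h; omega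
    rw [hS]
    simp only [Set.mem_setOf_eq]
    refine ⟨Fin.lt_def.mpr hab, haZ, hbZ, ?_⟩
    cases ε
    · obtain ⟨hnds, hds⟩ := key_pair hD'' hs'' hD hs h1 h2 (fun hiff => hc hiff.symm) h3
      exact fun hiff => hnds (hiff.mp hds)
    · obtain ⟨hnds, hds⟩ := key_pair hD hs hD'' hs'' h1 h2 hc h3
      exact fun hiff => hnds (hiff.mpr hds)
  have hinj : Set.InjOn ψ ↑X := by
    rintro ⟨⟨ε₁, a₁, b₁⟩, W₁⟩ hx₁ ⟨⟨ε₂, a₂, b₂⟩, W₂⟩ hx₂ heq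
    have h11 : (a₁ : ℕ) < (c : ℕ) := (hmemX _ (Finset.mem_coe.mp hx₁)).1.1
    have h12 : (c : ℕ) < (b₁ : ℕ) := (hmemX _ (Finset.mem_coe.mp hx₁)).1.2
    have h13 : W₁ ⊆ (Finset.Icc a₁ b₁)ᶜ := (hmemX _ (Finset.mem_coe.mp hx₁)).2
    have h23 : W₂ ⊆ (Finset.Icc a₂ b₂)ᶜ := (hmemX _ (Finset.mem_coe.mp hx₂)).2
    have ha : a₁ = a₂ := congrArg (fun t => t.1) heq
    have hb : b₁ = b₂ := congrArg (fun t => t.2.1) heq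
    have hZ : W₁ ∪ collSet (cond ε₁ D D'') a₁ b₁ = W₂ ∪ collSet (cond ε₂ D D'') a₂ b₂ :=
      congrArg (fun t => t.2.2) heq
    subst ha; subst hb
    have he : ε₁ = ε₂ := by
      by_contra hee
      have e1 := memZ_iff (D := cond ε₁ D D'') h13 h11 h12
      have e2 := memZ_iff (D := cond ε₂ D D'') h23 h11 h12
      rw [hZ] at e1
      have hcc := e1.symm.trans e2
      cases ε₁ <;> cases ε₂
      · exact hee rfl
      · exact hc hcc.symm
      · exact hc hcc
      · exact hee rfl
    subst he
    have hK : collSet (cond ε₁ D D'') a₁ b₁ ⊆ Finset.Icc a₁ b₁ := collSet_subset_Icc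
    have hW : W₁ = W₂ := by
      ext y
      by_cases hy : y ∈ Finset.Icc a₁ b₁
      · exact iff_of_false (fun h => (Finset.mem_compl.mp (h13 h)) hy)
          (fun h => (Finset.mem_compl.mp (h23 h)) hy)
      · have hy1 : y ∈ W₁ ↔ y ∈ W₁ ∪ collSet (cond ε₁ D D'') a₁ b₁ := by
          rw [Finset.mem_union]
          exact ⟨Or.inl, fun h => h.elim id (fun hk => absurd (hK hk) hy)⟩
        have hy2 : y ∈ W₂ ↔ y ∈ W₂ ∪ collSet (cond ε₁ D D'') a₁ b₁ := by
          rw [Finset.mem_union]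
          exact ⟨Or.inl, fun h => h.elim id (fun hk => absurd (hK hk) hy)⟩
        rw [hy1, hZ]
        exact hy2.symm
    subst hW
    rfl
  have hsub : ↑(Finset.image ψ X) ⊆ S := by
    intro t ht
    rw [Finset.coe_image] at ht
    obtain ⟨x, hx, rfl⟩ := ht
    exact himg x (Finset.mem_coe.mp hx)
  have hcard1 : (Finset.image ψ X).card ≤ S.ncard := by
    rw [← Set.ncard_coe_finset]
    exact Set.ncard_le_ncard hsub (Set.toFinite _)
  have hcard2 : (Finset.image ψ X).card = X.card := Finset.card_image_of_injOn hinj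
  have hXcard : X.card = 2 * ((2 ^ (c : ℕ) - 1) * (2 ^ (n - 1 - (c : ℕ)) - 1)) := by
    rw [hX, Finset.card_sigma]
    have hterm : ∀ q ∈ Q, (((Finset.Icc q.2.1 q.2.2)ᶜ).powerset).card
        = 2 ^ ((q.2.1 : ℕ) + (n - 1 - (q.2.2 : ℕ))) := by
      intro q hq
      rw [hQ, Finset.mem_product] at hq
      obtain ⟨-, hq2⟩ := hq
      rw [Finset.mem_product] at hq2
      have h1 := Fin.lt_def.mp (Finset.mem_Iio.mp hq2.1)
      have h2 := Fin.lt_def.mp (Finset.mem_Ioi.mp hq2.2)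
      have h3 := q.2.2.isLt
      rw [Finset.card_powerset, Finset.card_compl, Fin.card_Icc, Fintype.card_fin]
      congr 1
      omega
    rw [Finset.sum_congr rfl hterm, hQ, Finset.sum_product]
    simp_rw [Finset.sum_product, pow_add, ← Finset.sum_mul_sum,
      sum_Iio_pow c, sum_Ioi_pow c]
    rw [Finset.sum_const, Finset.card_univ, Fintype.card_bool, smul_eq_mul]
  have harith : 2 ^ (n - 1) - 2 ≤ 2 * ((2 ^ (c : ℕ) - 1) * (2 ^ (n - 1 - (c : ℕ)) - 1)) := by
    obtain ⟨p, hp⟩ : ∃ p, 2 ^ ((c : ℕ) - 1) = p + 1 :=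
      ⟨2 ^ ((c : ℕ) - 1) - 1, by have := Nat.one_le_two_pow (n := (c : ℕ) - 1); omega⟩
    obtain ⟨q, hq⟩ : ∃ q, 2 ^ (n - 2 - (c : ℕ)) = q + 1 :=
      ⟨2 ^ (n - 2 - (c : ℕ)) - 1, by have := Nat.one_le_two_pow (n := n - 2 - (c : ℕ)); omega⟩
    have e1 : 2 ^ (c : ℕ) = 2 * (p + 1) := by
      have h' : (c : ℕ) = ((c : ℕ) - 1) + 1 := by omega
      rw [h', pow_succ, hp]; ring
    have e2 : 2 ^ (n - 1 - (c : ℕ)) = 2 * (q + 1) := by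
      have h' : n - 1 - (c : ℕ) = (n - 2 - (c : ℕ)) + 1 := by omega
      rw [h', pow_succ, hq]; ring
    have e3 : 2 ^ (n - 1) = 4 * ((p + 1) * (q + 1)) := by
      have h' : n - 1 = (c : ℕ) + (n - 1 - (c : ℕ)) := by omega
      rw [h', pow_add, e1, e2]; ring
    rw [e1, e2, e3]
    have e4 : 2 * (p + 1) - 1 = 2 * p + 1 := by omega
    have e5 : 2 * (q + 1) - 1 = 2 * q + 1 := by omega
    rw [e4, e5]
    have e6 : 2 * ((2 * p + 1) * (2 * q + 1)) = 8 * p * q + 4 * p + 4 * q + 2 := by ring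
    have e7 : 4 * ((p + 1) * (q + 1)) = 4 * p * q + 4 * p + 4 * q + 4 := by ring
    rw [e6, e7]
    have e8 : 4 * p * q ≤ 8 * p * q := by nlinarith
    omega
  calc 2 ^ (n - 1) - 2
      ≤ 2 * ((2 ^ (c : ℕ) - 1) * (2 ^ (n - 1 - (c : ℕ)) - 1)) := harith
    _ = X.card := hXcard.symm
    _ = (Finset.image ψ X).card := hcard2.symm
    _ ≤ S.ncard := hcard1
    _ = dSepDist D D'' := hdist.symm
end

section
/- Let D and D'' be DAGs on the same vertex set V with |V| = n, both having path skeletons, and suppose the skeletons differ. Then for each edge {v_i, v_j} present in the skeleton of D but not in that of D'', the number of sets Z ⊆ V \ {v_i, v_j} such that v_i, v_j are d-connected given Z in D but d-separated given Z in D'' is 2^(n-2) - 2^(n-2-|Y|) ≥ 2^(n-3), where Y is the set of internal vertices of the unique v_i–v_j path in the skeleton of D''. Consequently, if the skeletons differ in t edges each way, the d-separation distance between D and D'' is at least 2t·2^(n-3). -/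
open List SimpleGraph

lemma asc_eq_range' : ∀ l : List ℕ, l.Chain' (fun a b => a + 1 = b) →
    l = List.range' (l.headD 0) l.length
  | [], _ => rfl
  | [a], _ => rfl
  | a :: b :: t, h => by
    simp only [List.Chain', List.isChain_cons_cons] at h
    have ih := asc_eq_range' (b :: t) h.2
    simp only [headD_cons] at ih ⊢
    rw [length_cons, List.range'_succ, ← h.1]
    exact congrArg (a :: ·) (by simpa [← h.1] using ih)

lemma updown : ∀ l : List ℕ, l.Nodup → l.Chain' (fun a b => a + 1 = b ∨ b + 1 = a) →
    l.Chain' (fun a b => a + 1 = b) ∨ l.Chain' (fun a b => b + 1 = a)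
  | [], _, _ => Or.inl List.IsChain.nil
  | [a], _, _ => Or.inl (List.isChain_singleton a)
  | a :: b :: t, hnd, h => by
    simp only [List.Chain', List.isChain_cons_cons] at h
    have ih := updown (b :: t) (List.Nodup.of_cons hnd) h.2
    match t, ih with
    | [], _ =>
      rcases h.1 with h1 | h1
      · exact Or.inl (List.isChain_pair.mpr h1)
      · exact Or.inr (List.isChain_pair.mpr h1)
    | c :: t', ih =>
      rcases h.1 with h1 | h1
      · rcases ih with ih | ih
        · exact Or.inl (List.isChain_cons_cons.mpr ⟨h1, ih⟩)
        · exfalso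
          have hbc : c + 1 = b := (List.isChain_cons_cons.mp ih).1
          have : a = c := by omega
          exact (List.nodup_cons.mp hnd).1 (by simp [this])
      · rcases ih with ih | ih
        · exfalso
          have hbc : b + 1 = c := (List.isChain_cons_cons.mp ih).1
          have : a = c := by omega
          exact (List.nodup_cons.mp hnd).1 (by simp [this])
        · exact Or.inr (List.isChain_cons_cons.mpr ⟨h1, ih⟩)

lemma asc_canon {l : List ℕ} {u v : ℕ} (hc : l.Chain' (fun a b => a + 1 = b))
    (hh : l.head? = some u) (hl : l.getLast? = some v) :
    u ≤ v ∧ l = List.range' u (v + 1 - u) := by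
  have hne : l ≠ [] := by rintro rfl; simp at hh
  have hform : l = List.range' (l.headD 0) l.length := asc_eq_range' l hc
  have hu : l.headD 0 = u := by rw [List.headD_eq_head?_getD, hh]; rfl
  rw [hu] at hform
  have hlen : 0 < l.length := List.length_pos_iff.mpr hne
  have hv : v = u + (l.length - 1) := by
    have h2 : (List.range' u l.length)[l.length - 1]? = some (u + (l.length - 1)) := by
      rw [List.getElem?_range' (by omega)]
      simp
    rw [hform] at hl
    rw [List.getLast?_eq_getElem?] at hl
    rw [List.length_range'] at hl
    rw [hl] at h2
    exact Option.some_injective _ h2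
  constructor
  · omega
  · rw [hform]; congr 1; omega

lemma nat_canon {l : List ℕ} {u v : ℕ} (hnd : l.Nodup)
    (hc : l.Chain' (fun a b => a + 1 = b ∨ b + 1 = a))
    (hh : l.head? = some u) (hl : l.getLast? = some v) :
    l = if u ≤ v then List.range' u (v + 1 - u) else (List.range' v (u + 1 - v)).reverse := by
  rcases updown l hnd hc with hup | hdown
  · obtain ⟨huv, hform⟩ := asc_canon hup hh hl
    rw [if_pos huv]; exact hform
  · have hrev : l.reverse.Chain' (fun a b => a + 1 = b) := by
      simp only [List.Chain', List.isChain_reverse]; exact hdown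
    obtain ⟨hvu, hform⟩ := asc_canon hrev (by rw [List.head?_reverse]; exact hl)
      (by rw [List.getLast?_reverse]; exact hh)
    by_cases huv : u ≤ v
    · have huv' : u = v := le_antisymm huv hvu
      subst huv'
      rw [if_pos le_rfl]
      have : l.reverse = List.range' u 1 := by simpa using hform
      have h1 : l = [u] := by
        have := congrArg List.reverse this
        simpa using this
      simp [h1]
    · rw [if_neg huv]
      have := congrArg List.reverse hform
      simpa using this

lemma nat_path_unique {l₁ l₂ : List ℕ} {u v : ℕ}
    (h₁ : l₁.Nodup) (c₁ : l₁.Chain' (fun a b => a + 1 = b ∨ b + 1 = a))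
    (hh₁ : l₁.head? = some u) (hl₁ : l₁.getLast? = some v)
    (h₂ : l₂.Nodup) (c₂ : l₂.Chain' (fun a b => a + 1 = b ∨ b + 1 = a))
    (hh₂ : l₂.head? = some u) (hl₂ : l₂.getLast? = some v) : l₁ = l₂ := by
  rw [nat_canon h₁ c₁ hh₁ hl₁, nat_canon h₂ c₂ hh₂ hl₂]

section
variable {n : ℕ} [NeZero n] {D : Fin n → Fin n → Prop} {τ : Equiv.Perm (Fin n)}
  {i j u v : Fin n} {P p q : List (Fin n)}

lemma skelPath_chain_adj (hp : IsSkelPath D u v p) : p.Chain' (Skel D).Adj := by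
  obtain ⟨hnd, -, -, hc⟩ := hp
  simp only [List.Chain', List.isChain_iff_getElem] at hc ⊢
  intro i h
  exact ⟨fun heq => by have := hnd.getElem_inj_iff.mp heq; omega, hc i h⟩


lemma skelPath_vals (hs : Skel D = (pathGraph n).comap τ) (hp : IsSkelPath D u v p) :
    (p.map (fun x => ((τ x : Fin n) : ℕ))).Nodup ∧
    (p.map (fun x => ((τ x : Fin n) : ℕ))).Chain' (fun a b => a + 1 = b ∨ b + 1 = a) ∧
    (p.map (fun x => ((τ x : Fin n) : ℕ))).head? = some ((τ u : Fin n) : ℕ) ∧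
    (p.map (fun x => ((τ x : Fin n) : ℕ))).getLast? = some ((τ v : Fin n) : ℕ) := by
  have hinj : Function.Injective (fun x : Fin n => ((τ x : Fin n) : ℕ)) :=
    Fin.val_injective.comp τ.injective
  refine ⟨hp.1.map hinj, ?_, ?_, ?_⟩
  · simp only [List.Chain', List.isChain_map]
    refine (skelPath_chain_adj hp).imp ?_
    intro a b hab
    rw [hs] at hab
    exact pathGraph_adj.mp hab
  · rw [List.head?_map, hp.2.1]; rfl
  · rw [List.getLast?_map, hp.2.2.1]; rfl

lemma skelPath_unique (hs : Skel D = (pathGraph n).comap τ)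
    (hp : IsSkelPath D u v p) (hq : IsSkelPath D u v q) : p = q := by
  have hinj : Function.Injective (fun x : Fin n => ((τ x : Fin n) : ℕ)) :=
    Fin.val_injective.comp τ.injective
  obtain ⟨n1, c1, h1, l1⟩ := skelPath_vals hs hp
  obtain ⟨n2, c2, h2, l2⟩ := skelPath_vals hs hq
  exact List.map_injective_iff.mpr hinj (nat_path_unique n1 c1 h1 l1 n2 c2 h2 l2)

-- basic structure of a skel path
lemma skelPath_ne_nil (hP : IsSkelPath D i j P) : P ≠ [] := by
  rintro rfl; simpa using hP.2.1

lemma skelPath_head (hP : IsSkelPath D i j P) :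
    P[0]'(List.length_pos_iff.mpr (skelPath_ne_nil hP)) = i := by
  have h := hP.2.1
  rw [List.head?_eq_head (skelPath_ne_nil hP)] at h
  rw [← List.head_eq_getElem (skelPath_ne_nil hP)]
  exact Option.some_injective _ h

lemma skelPath_last (hP : IsSkelPath D i j P) :
    P[P.length - 1]'(by have := List.length_pos_iff.mpr (skelPath_ne_nil hP); omega) = j := by
  have h := hP.2.2.1
  rw [List.getLast?_eq_getLast (skelPath_ne_nil hP)] at h
  rw [← List.getLast_eq_getElem (skelPath_ne_nil hP)]
  exact Option.some_injective _ h

lemma skelPath_len2 (hP : IsSkelPath D i j P) (hij : i ≠ j) : 2 ≤ P.length := by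
  have h1 : 0 < P.length := List.length_pos_iff.mpr (skelPath_ne_nil hP)
  rcases Nat.lt_or_ge P.length 2 with h | h
  · exfalso
    have : P.length = 1 := by omega
    have h0 := skelPath_head hP
    have hl := skelPath_last hP
    have hlen1 : P.length = 1 := by omega
    obtain ⟨a, rfl⟩ := List.length_eq_one_iff.mp hlen1
    simp only [List.getElem_singleton] at h0 hl
    exact hij (by rw [← h0, ← hl])
  · exact h

/-- internal vertices are exactly the support minus endpoints -/
lemma mem_internal (hP : IsSkelPath D i j P) (hij : i ≠ j) {y : Fin n} :
    y ∈ P.toFinset \ {i, j} ↔ ∃ m : ℕ, 0 < m ∧ m + 1 < P.length ∧ P.getD m default = y := by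
  have hnd := hP.1
  have h0 := skelPath_head hP
  have hl := skelPath_last hP
  have hlen : 0 < P.length := List.length_pos_iff.mpr (skelPath_ne_nil hP)
  constructor
  · rintro hy
    simp only [Finset.mem_sdiff, List.mem_toFinset, Finset.mem_insert, Finset.mem_singleton,
      not_or] at hy
    obtain ⟨m, hm, hym⟩ := List.mem_iff_getElem.mp hy.1
    have hm0 : m ≠ 0 := by rintro rfl; exact hy.2.1 (by rw [← hym, h0])
    have hml : m ≠ P.length - 1 := by
      rintro rfl; exact hy.2.2 (by rw [← hym]; exact hl)
    refine ⟨m, by omega, by omega, ?_⟩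
    rw [List.getD_eq_getElem _ _ hm]; exact hym
  · rintro ⟨m, hm0, hm1, hym⟩
    have hm : m < P.length := by omega
    rw [List.getD_eq_getElem _ _ hm] at hym
    simp only [Finset.mem_sdiff, List.mem_toFinset, Finset.mem_insert, Finset.mem_singleton,
      not_or]
    refine ⟨hym ▸ List.getElem_mem hm, ?_, ?_⟩
    · rw [← hym, ← h0]
      intro h
      have := hnd.getElem_inj_iff.mp h
      omega
    · rw [← hym, ← hl]
      intro h
      have := hnd.getElem_inj_iff.mp h
      omega

/-- neighbors on the path are the only skeleton-neighbors of an internal vertex -/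
lemma internal_nbrs (hs : Skel D = (pathGraph n).comap τ) (hP : IsSkelPath D i j P)
    {m : ℕ} (hm0 : 0 < m) (hm1 : m + 1 < P.length) {w : Fin n}
    (hw : (Skel D).Adj (P[m]'(by omega)) w) :
    w = P[m-1]'(by omega) ∨ w = P[m+1]'hm1 := by
  have hnd := hP.1
  have hchain := skelPath_chain_adj hP
  simp only [List.Chain', List.isChain_iff_getElem] at hchain
  have hs1 := hchain (m-1) (by omega)
  have hs2 := hchain m (by omega)
  have hmm : m - 1 + 1 = m := by omega
  simp only [hmm] at hs1
  -- translate all adjacencies to pathGraph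
  have tr : ∀ {a b : Fin n}, (Skel D).Adj a b →
      ((τ a : Fin n) : ℕ) + 1 = ((τ b : Fin n) : ℕ) ∨ ((τ b : Fin n) : ℕ) + 1 = ((τ a : Fin n) : ℕ) := by
    intro a b hab; rw [hs] at hab; exact pathGraph_adj.mp hab
  have t1 := tr hs1
  have t2 := tr hs2
  have tw := tr hw
  have hne : (P[m-1]'(by omega)) ≠ (P[m+1]'hm1) := by
    intro h; have := hnd.getElem_inj_iff.mp h; omega
  have hnev : ((τ (P[m-1]'(by omega)) : Fin n) : ℕ) ≠ ((τ (P[m+1]'hm1) : Fin n) : ℕ) := by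
    intro h; exact hne (τ.injective (Fin.val_injective h))
  have : ((τ w : Fin n) : ℕ) = ((τ (P[m-1]'(by omega)) : Fin n) : ℕ) ∨
      ((τ w : Fin n) : ℕ) = ((τ (P[m+1]'hm1) : Fin n) : ℕ) := by omega
  rcases this with h | h
  · exact Or.inl (τ.injective (Fin.val_injective h))
  · exact Or.inr (τ.injective (Fin.val_injective h))

end

section
variable {n : ℕ} [NeZero n] {D : Fin n → Fin n → Prop} {τ : Equiv.Perm (Fin n)}
  {i j : Fin n} {P : List (Fin n)}

lemma no_out (hD : IsDAG D) (hs : Skel D = (pathGraph n).comap τ) (hP : IsSkelPath D i j P)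
    {m : ℕ} (hm0 : 0 < m) (hm1 : m + 1 < P.length) (hcol : ColliderAt D P m)
    {w : Fin n} (hw : D (P.getD m default) w) : False := by
  have hm : m < P.length := by omega
  have hgd : P.getD m default = P[m]'hm := List.getD_eq_getElem _ _ hm
  obtain ⟨hc1, hc2⟩ := hcol
  rw [hgd] at hw
  rw [List.getD_eq_getElem _ _ (show m - 1 < P.length by omega), hgd] at hc1
  rw [List.getD_eq_getElem _ _ hm1, hgd] at hc2
  by_cases hwP : w = P[m]'hm
  · subst hwP; exact hD _ (Relation.TransGen.single hw)
  · have hadj : (Skel D).Adj (P[m]'hm) w := ⟨fun h => hwP h.symm, Or.inl hw⟩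
    have hback : D w (P[m]'hm) := by
      rcases internal_nbrs hs hP hm0 hm1 hadj with h | h
      · rw [h]; exact hc1
      · rw [h]; exact hc2
    exact hD _ (Relation.TransGen.head hw (Relation.TransGen.single hback))

lemma collider_desc (hD : IsDAG D) (hs : Skel D = (pathGraph n).comap τ)
    (hP : IsSkelPath D i j P) {m : ℕ} (hm0 : 0 < m) (hm1 : m + 1 < P.length)
    (hcol : ColliderAt D P m) {w : Fin n} (hw : Desc D (P.getD m default) w) :
    w = P.getD m default := by
  rcases Relation.ReflTransGen.cases_head hw with h | ⟨c, hc, -⟩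
  · exact h.symm
  · exact absurd hc (fun hc => no_out hD hs hP hm0 hm1 hcol hc)

lemma collider_iff (hD : IsDAG D) (hs : Skel D = (pathGraph n).comap τ)
    (hP : IsSkelPath D i j P) {m : ℕ} (hm0 : 0 < m) (hm1 : m + 1 < P.length) :
    ColliderAt D P m ↔ IsColliderVertex D (P.getD m default) := by
  have hm : m < P.length := by omega
  have hgd : P.getD m default = P[m]'hm := List.getD_eq_getElem _ _ hm
  have hgd1 : P.getD (m-1) default = P[m-1]'(by omega) := List.getD_eq_getElem _ _ (by omega)
  have hgd2 : P.getD (m+1) default = P[m+1]'hm1 := List.getD_eq_getElem _ _ hm1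
  constructor
  · rintro ⟨h1, h2⟩
    rw [hgd, hgd1] at h1
    rw [hgd, hgd2] at h2
    rw [hgd]
    refine ⟨_, _, ?_, h1, h2⟩
    intro h
    have := hP.1.getElem_inj_iff.mp h
    omega
  · rintro ⟨a, b, hab, ha, hb⟩
    have key : ∀ x : Fin n, D x (P[m]'hm) → x = P[m-1]'(by omega) ∨ x = P[m+1]'hm1 := by
      intro x hx
      have hxP : (P[m]'hm) ≠ x := by
        rintro rfl; exact hD _ (Relation.TransGen.single hx)
      exact internal_nbrs hs hP hm0 hm1 ⟨hxP, Or.inr hx⟩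
    rw [hgd] at ha hb
    rw [ColliderAt, hgd, hgd1, hgd2]
    rcases key a ha with h | h <;> rcases key b hb with h' | h'
    · exact absurd (h.trans h'.symm) hab
    · exact ⟨h ▸ ha, h' ▸ hb⟩
    · exact ⟨h' ▸ hb, h ▸ ha⟩
    · exact absurd (h.trans h'.symm) hab

open Classical in
lemma blocked_iff (hD : IsDAG D) (hs : Skel D = (pathGraph n).comap τ)
    (hP : IsSkelPath D i j P) (hij : i ≠ j) (Z : Finset (Fin n)) :
    Blocked D Z P ↔
      Z ∩ (P.toFinset \ {i, j}) ≠ (P.toFinset \ {i, j}).filter (IsColliderVertex D) := by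
  constructor
  · rintro ⟨m, hm0, hm1, hcase⟩
    have hyY : P.getD m default ∈ P.toFinset \ {i, j} :=
      (mem_internal hP hij).mpr ⟨m, hm0, hm1, rfl⟩
    rcases hcase with ⟨hnc, hyZ⟩ | ⟨hc, hnd⟩
    · intro heq
      have : P.getD m default ∈ (P.toFinset \ {i, j}).filter (IsColliderVertex D) := by
        rw [← heq]; exact Finset.mem_inter.mpr ⟨hyZ, hyY⟩
      exact hnc ((collider_iff hD hs hP hm0 hm1).mpr (Finset.mem_filter.mp this).2)
    · intro heq
      have hyY' : P.getD m default ∈ (P.toFinset \ {i, j}).filter (IsColliderVertex D) :=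
        Finset.mem_filter.mpr ⟨hyY, (collider_iff hD hs hP hm0 hm1).mp hc⟩
      rw [← heq] at hyY'
      exact hnd _ Relation.ReflTransGen.refl (Finset.mem_inter.mp hyY').1
  · intro hne
    by_contra hnb
    apply hne
    ext y
    simp only [Finset.mem_inter, Finset.mem_filter]
    constructor
    · rintro ⟨hyZ, hyY⟩
      refine ⟨hyY, ?_⟩
      obtain ⟨m, hm0, hm1, hym⟩ := (mem_internal hP hij).mp hyY
      by_contra hnc
      exact hnb ⟨m, hm0, hm1, Or.inl ⟨fun hc =>
        hnc (hym ▸ (collider_iff hD hs hP hm0 hm1).mp hc), hym ▸ hyZ⟩⟩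
    · rintro ⟨hyY, hcv⟩
      obtain ⟨m, hm0, hm1, hym⟩ := (mem_internal hP hij).mp hyY
      refine ⟨?_, hyY⟩
      by_contra hyZ
      exact hnb ⟨m, hm0, hm1, Or.inr ⟨(collider_iff hD hs hP hm0 hm1).mpr (hym ▸ hcv),
        fun w hw hwZ => hyZ (by rw [← hym, ← collider_desc hD hs hP hm0 hm1
          ((collider_iff hD hs hP hm0 hm1).mpr (hym ▸ hcv)) hw]; exact hwZ)⟩⟩

open Classical in
lemma dsep_iff_s17 (hD : IsDAG D) (hs : Skel D = (pathGraph n).comap τ)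
    (hP : IsSkelPath D i j P) (hij : i ≠ j) (Z : Finset (Fin n)) :
    DSep D i j Z ↔
      Z ∩ (P.toFinset \ {i, j}) ≠ (P.toFinset \ {i, j}).filter (IsColliderVertex D) := by
  constructor
  · intro h
    exact (blocked_iff hD hs hP hij Z).mp (h P hP)
  · intro h q hq
    rw [skelPath_unique hs hq hP]
    exact (blocked_iff hD hs hP hij Z).mpr h

end

section
variable {n : ℕ} [NeZero n] {D : Fin n → Fin n → Prop} {τ : Equiv.Perm (Fin n)}
  {i j : Fin n} {P : List (Fin n)}

lemma internal_nonempty (hP : IsSkelPath D i j P) (hij : i ≠ j)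
    (hnadj : ¬ (Skel D).Adj i j) : (P.toFinset \ {i, j}).Nonempty := by
  have hlen2 := skelPath_len2 hP hij
  have hlen3 : 3 ≤ P.length := by
    rcases Nat.lt_or_ge P.length 3 with h | h
    · exfalso
      have : P.length = 2 := by omega
      obtain ⟨a, b, rfl⟩ := List.length_eq_two.mp this
      have h0 := skelPath_head hP
      have hl := skelPath_last hP
      simp only [List.length_cons, List.length_singleton] at h0 hl
      have ha : a = i := h0
      have hb : b = j := by simpa using hl
      subst ha; subst hb
      have hc := hP.2.2.2
      simp only [List.Chain', List.isChain_cons_cons] at hc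
      exact hnadj ⟨hij, hc.1⟩
    · exact h
  exact ⟨P.getD 1 default, (mem_internal hP hij).mpr ⟨1, one_pos, by omega, rfl⟩⟩

lemma not_dsep_of_adj (hadj : (Skel D).Adj i j) (Z : Finset (Fin n)) : ¬ DSep D i j Z := by
  intro h
  have hP : IsSkelPath D i j [i, j] := by
    refine ⟨by simp [hadj.ne], rfl, rfl, ?_⟩
    exact List.isChain_pair.mpr hadj.2
  obtain ⟨m, hm0, hm1, -⟩ := h [i, j] hP
  simp at hm1
  omega

lemma walk_skelPath {p : (Skel D).Walk i j} (hp : p.IsPath) : IsSkelPath D i j p.support := by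
  refine ⟨hp.support_nodup, by rw [p.support_eq_cons]; rfl,
    by rw [List.getLast?_eq_getLast (by simp), p.getLast_support], ?_⟩
  exact (p.isChain_adj_support).imp (fun a b h => h.2)

def skel_iso (hs : Skel D = (pathGraph n).comap τ) : Skel D ≃g pathGraph n :=
  ⟨τ, by intro a b; rw [hs]; rfl⟩

lemma exists_skelPath (hs : Skel D = (pathGraph n).comap τ) (i j : Fin n) :
    ∃ P, IsSkelPath D i j P := by
  have hpre : (Skel D).Preconnected := by
    intro a b
    have := pathGraph_preconnected n (τ a) (τ b)
    have h2 := this.map (skel_iso hs).symm.toHom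
    rwa [show (skel_iso hs).symm.toHom (τ a) = a from τ.symm_apply_apply a,
      show (skel_iso hs).symm.toHom (τ b) = b from τ.symm_apply_apply b] at h2
  obtain ⟨w⟩ := hpre i j
  exact ⟨w.toPath.val.support, walk_skelPath w.toPath.prop⟩

end

lemma count_ineq {n k : ℕ} (hn : 3 ≤ n) (hk : 1 ≤ k) :
    2 ^ (n - 3) ≤ 2 ^ (n - 2) - 2 ^ (n - 2 - k) := by
  have h1 : (2:ℕ) ^ (n - 2 - k) ≤ 2 ^ (n - 3) := Nat.pow_le_pow_right two_pos (by omega)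
  have h2 : (2:ℕ) ^ (n - 2) = 2 ^ (n - 3) * 2 := by rw [← pow_succ]; congr 1; omega
  omega

lemma count_lemma {n : ℕ} (hn : 3 ≤ n) {i j : Fin n} (hij : i ≠ j)
    (Y Y' : Finset (Fin n)) (hY : ∀ y ∈ Y, y ≠ i ∧ y ≠ j) (hY' : Y' ⊆ Y) :
    Set.ncard {Z : Finset (Fin n) | i ∉ Z ∧ j ∉ Z ∧ Z ∩ Y ≠ Y'} =
      2 ^ (n - 2) - 2 ^ (n - 2 - Y.card) := by
  classical
  set s : Finset (Fin n) := Finset.univ \ {i, j} with hs_def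
  have hscard : s.card = n - 2 := by
    rw [hs_def, Finset.card_sdiff_of_subset (Finset.subset_univ _), Finset.card_univ, Fintype.card_fin,
      Finset.card_pair hij]
  have hYs : Y ⊆ s := by
    intro y hy
    simp only [hs_def, Finset.mem_sdiff, Finset.mem_univ, Finset.mem_insert,
      Finset.mem_singleton, true_and, not_or]
    exact hY y hy
  have hset : {Z : Finset (Fin n) | i ∉ Z ∧ j ∉ Z ∧ Z ∩ Y ≠ Y'} =
      ↑(s.powerset.filter (fun Z => ¬ Z ∩ Y = Y')) := by
    ext Z
    simp only [Set.mem_setOf_eq, Finset.coe_filter, Finset.mem_powerset, Set.mem_setOf_eq]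
    constructor
    · rintro ⟨hi, hj, hne⟩
      refine ⟨fun x hx => ?_, hne⟩
      simp only [hs_def, Finset.mem_sdiff, Finset.mem_univ, Finset.mem_insert,
        Finset.mem_singleton, true_and, not_or]
      exact ⟨fun h => hi (h ▸ hx), fun h => hj (h ▸ hx)⟩
    · rintro ⟨hsub, hne⟩
      refine ⟨fun h => ?_, fun h => ?_, hne⟩
      · have := hsub h
        simp [hs_def] at this
      · have := hsub h
        simp [hs_def] at this
  rw [hset, Set.ncard_coe_finset]
  have hsplit := Finset.card_filter_add_card_filter_not
    (s := s.powerset) (p := fun Z => Z ∩ Y = Y')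
  have hpow : s.powerset.card = 2 ^ (n - 2) := by rw [Finset.card_powerset, hscard]
  have heqcard : (s.powerset.filter (fun Z => Z ∩ Y = Y')).card = 2 ^ (n - 2 - Y.card) := by
    have hc : ((s \ Y).powerset).card = 2 ^ (n - 2 - Y.card) := by
      rw [Finset.card_powerset, Finset.card_sdiff_of_subset hYs, hscard]
    rw [← hc]
    apply Finset.card_bij (fun Z _ => Z \ Y)
    · intro Z hZ
      rw [Finset.mem_filter, Finset.mem_powerset] at hZ
      rw [Finset.mem_powerset]
      exact Finset.sdiff_subset_sdiff hZ.1 le_rfl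
    · intro Z1 h1 Z2 h2 heq
      rw [Finset.mem_filter] at h1 h2
      have e1 : Z1 = Z1 \ Y ∪ Y' := by rw [← h1.2]; exact (Finset.sdiff_union_inter Z1 Y).symm
      have e2 : Z2 = Z2 \ Y ∪ Y' := by rw [← h2.2]; exact (Finset.sdiff_union_inter Z2 Y).symm
      rw [e1, e2, heq]
    · intro W hW
      rw [Finset.mem_powerset] at hW
      refine ⟨W ∪ Y', ?_, ?_⟩
      · rw [Finset.mem_filter, Finset.mem_powerset]
        constructor
        · exact Finset.union_subset (hW.trans (Finset.sdiff_subset)) (hY'.trans hYs)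
        · ext x
          simp only [Finset.mem_inter, Finset.mem_union]
          constructor
          · rintro ⟨hx1 | hx1, hx2⟩
            · exact absurd hx2 (by have := hW hx1; simp only [Finset.mem_sdiff] at this; exact this.2)
            · exact hx1
          · intro hx
            exact ⟨Or.inr hx, hY' hx⟩
      · ext x
        simp only [Finset.mem_sdiff, Finset.mem_union]
        constructor
        · rintro ⟨hx1 | hx1, hx2⟩
          · exact hx1
          · exact absurd (hY' hx1) hx2
        · intro hx
          exact ⟨Or.inl hx, by have := hW hx; simp only [Finset.mem_sdiff] at this; exact this.2⟩
  omega

open Classical in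
lemma key_count {n : ℕ} [NeZero n] (hn : 3 ≤ n) {D : Fin n → Fin n → Prop}
    {τ : Equiv.Perm (Fin n)} (hD : IsDAG D) (hs : Skel D = (pathGraph n).comap τ)
    {i j : Fin n} (hij : i ≠ j) (hnadj : ¬ (Skel D).Adj i j)
    {P : List (Fin n)} (hP : IsSkelPath D i j P) :
    Set.ncard {Z : Finset (Fin n) | i ∉ Z ∧ j ∉ Z ∧ DSep D i j Z} =
      2 ^ (n - 2) - 2 ^ (n - 2 - (P.toFinset \ {i, j}).card) ∧
    1 ≤ (P.toFinset \ {i, j}).card := by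
  constructor
  · have hset : {Z : Finset (Fin n) | i ∉ Z ∧ j ∉ Z ∧ DSep D i j Z} =
        {Z : Finset (Fin n) | i ∉ Z ∧ j ∉ Z ∧
          Z ∩ (P.toFinset \ {i, j}) ≠ (P.toFinset \ {i, j}).filter (IsColliderVertex D)} := by
      ext Z
      simp only [Set.mem_setOf_eq]
      exact and_congr_right fun _ => and_congr_right fun _ => dsep_iff_s17 hD hs hP hij Z
    rw [hset]
    apply count_lemma hn hij
    · intro y hy
      simp only [Finset.mem_sdiff, Finset.mem_insert, Finset.mem_singleton, not_or] at hy
      exact hy.2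
    · exact Finset.filter_subset _ _
  · exact Finset.card_pos.mpr (internal_nonempty hP hij hnadj)

lemma pair_bound {n : ℕ} [NeZero n] (hn : 3 ≤ n) {D₁ D₂ : Fin n → Fin n → Prop}
    (hD₂ : IsDAG D₂) {τ : Equiv.Perm (Fin n)}
    (hs₂ : Skel D₂ = (pathGraph n).comap τ)
    {i j : Fin n} (hadj : (Skel D₁).Adj i j) (hnadj : ¬ (Skel D₂).Adj i j) :
    2 ^ (n - 3) ≤
      Set.ncard {Z : Finset (Fin n) | i ∉ Z ∧ j ∉ Z ∧ ¬ (DSep D₁ i j Z ↔ DSep D₂ i j Z)} := by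
  obtain ⟨P, hP⟩ := exists_skelPath hs₂ i j
  obtain ⟨hcount, hcard⟩ := key_count hn hD₂ hs₂ hadj.ne hnadj hP
  have hset : {Z : Finset (Fin n) | i ∉ Z ∧ j ∉ Z ∧ ¬ (DSep D₁ i j Z ↔ DSep D₂ i j Z)} =
      {Z : Finset (Fin n) | i ∉ Z ∧ j ∉ Z ∧ DSep D₂ i j Z} := by
    ext Z
    simp only [Set.mem_setOf_eq]
    refine and_congr_right fun _ => and_congr_right fun _ => ?_
    have := not_dsep_of_adj hadj Z
    tauto
  rw [hset, hcount]
  exact count_ineq hn hcard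


set_option maxHeartbeats 1000000 in
theorem different_path_skeletons_far {n : ℕ} [NeZero n] (hn : 3 ≤ n)
    (D D'' : Fin n → Fin n → Prop) (hD : IsDAG D) (hD'' : IsDAG D'')
    (σ τ : Equiv.Perm (Fin n))
    (hs : Skel D = (SimpleGraph.pathGraph n).comap ⇑σ)
    (hs'' : Skel D'' = (SimpleGraph.pathGraph n).comap ⇑τ)
    (hne : Skel D ≠ Skel D'') :
    (∀ i j : Fin n, (Skel D).Adj i j → ¬ (Skel D'').Adj i j →
      ∀ p : (Skel D'').Walk i j, p.IsPath →
        Set.ncard {Z : Finset (Fin n) | i ∉ Z ∧ j ∉ Z ∧ ¬ DSep D i j Z ∧ DSep D'' i j Z} =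
            2 ^ (n - 2) - 2 ^ (n - 2 - (p.support.toFinset \ {i, j}).card) ∧
          2 ^ (n - 3) ≤ 2 ^ (n - 2) - 2 ^ (n - 2 - (p.support.toFinset \ {i, j}).card)) ∧
    2 * ((Skel D).edgeSet \ (Skel D'').edgeSet).ncard * 2 ^ (n - 3) ≤ dSepDist D D'' := by
  classical
  constructor
  · intro i j hadj hnadj p hpath
    have hP := walk_skelPath hpath
    obtain ⟨hcount, hcard⟩ := key_count hn hD'' hs'' hadj.ne hnadj hP
    constructor
    · have hset : {Z : Finset (Fin n) | i ∉ Z ∧ j ∉ Z ∧ ¬ DSep D i j Z ∧ DSep D'' i j Z} =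
          {Z : Finset (Fin n) | i ∉ Z ∧ j ∉ Z ∧ DSep D'' i j Z} := by
        ext Z
        simp only [Set.mem_setOf_eq]
        have := not_dsep_of_adj hadj Z
        tauto
      rw [hset]
      exact hcount
    · exact count_ineq hn hcard
  · have hSfin : {t : Fin n × Fin n × Finset (Fin n) |
        t.1 < t.2.1 ∧ t.1 ∉ t.2.2 ∧ t.2.1 ∉ t.2.2 ∧
        ¬ (DSep D t.1 t.2.1 t.2.2 ↔ DSep D'' t.1 t.2.1 t.2.2)}.Finite := Set.toFinite _
    set E1s := (Skel D).edgeSet \ (Skel D'').edgeSet with hE1s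
    set E2s := (Skel D'').edgeSet \ (Skel D).edgeSet with hE2s
    set E1f := (Set.toFinite E1s).toFinset with hE1f
    set E2f := (Set.toFinite E2s).toFinset with hE2f
    -- the two skeletons have equally many edges
    have hED : ((Skel D).edgeSet).ncard = ((Skel D'').edgeSet).ncard := by
      have h1 : ((Skel D).edgeSet).ncard = ((SimpleGraph.pathGraph n).edgeSet).ncard := by
        rw [← Nat.card_coe_set_eq, ← Nat.card_coe_set_eq]
        exact Nat.card_congr (skel_iso hs).mapEdgeSet
      have h2 : ((Skel D'').edgeSet).ncard = ((SimpleGraph.pathGraph n).edgeSet).ncard := by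
        rw [← Nat.card_coe_set_eq, ← Nat.card_coe_set_eq]
        exact Nat.card_congr (skel_iso hs'').mapEdgeSet
      rw [h1, h2]
    have hcardeq : E1f.card = E2f.card := by
      have hd1 : E1f = (Set.toFinite (Skel D).edgeSet).toFinset \
          (Set.toFinite (Skel D'').edgeSet).toFinset := by
        rw [hE1f]
        exact Set.Finite.toFinset_sdiff _ _ _
      have hd2 : E2f = (Set.toFinite (Skel D'').edgeSet).toFinset \
          (Set.toFinite (Skel D).edgeSet).toFinset := by
        rw [hE2f]
        exact Set.Finite.toFinset_sdiff _ _ _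
      have hc1 := Finset.card_sdiff_add_card_inter
        (Set.toFinite (Skel D).edgeSet).toFinset (Set.toFinite (Skel D'').edgeSet).toFinset
      have hc2 := Finset.card_sdiff_add_card_inter
        (Set.toFinite (Skel D'').edgeSet).toFinset (Set.toFinite (Skel D).edgeSet).toFinset
      have hEDf : (Set.toFinite (Skel D).edgeSet).toFinset.card =
          (Set.toFinite (Skel D'').edgeSet).toFinset.card := by
        rw [← Set.ncard_eq_toFinset_card _ (Set.toFinite (Skel D).edgeSet),
          ← Set.ncard_eq_toFinset_card _ (Set.toFinite (Skel D'').edgeSet)]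
        exact hED
      rw [Finset.inter_comm] at hc2
      rw [hd1, hd2]
      omega
    have hdisj : Disjoint E1f E2f := by
      rw [Finset.disjoint_left]
      intro e he1 he2
      rw [hE1f, Set.Finite.mem_toFinset, hE1s] at he1
      rw [hE2f, Set.Finite.mem_toFinset, hE2s] at he2
      exact he1.2 he2.1
    set Pf : Finset (Fin n × Fin n) := Finset.univ.filter
      (fun a => a.1 < a.2 ∧ (s(a.1, a.2) ∈ E1f ∨ s(a.1, a.2) ∈ E2f)) with hPf
    have hPfcard : Pf.card = E1f.card + E2f.card := by
      rw [← Finset.card_union_of_disjoint hdisj]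
      apply Finset.card_bij (fun a _ => s(a.1, a.2))
      · intro a ha
        rw [hPf, Finset.mem_filter] at ha
        exact Finset.mem_union.mpr ha.2.2
      · intro a ha b hb heq
        rw [hPf, Finset.mem_filter] at ha hb
        rcases Sym2.eq_iff.mp heq with ⟨h1, h2⟩ | ⟨h1, h2⟩
        · exact Prod.ext h1 h2
        · have : a.1 < a.1 := by
            calc a.1 < a.2 := ha.2.1
            _ = b.1 := h2
            _ < b.2 := hb.2.1
            _ = a.1 := h1.symm
          exact absurd this (lt_irrefl _)
      · intro e he
        induction e using Sym2.ind with
        | _ a b =>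
          have hne : a ≠ b := by
            rcases Finset.mem_union.mp he with h | h
            · rw [hE1f, Set.Finite.mem_toFinset, hE1s] at h
              exact ((Skel D).mem_edgeSet.mp h.1).ne
            · rw [hE2f, Set.Finite.mem_toFinset, hE2s] at h
              exact ((Skel D'').mem_edgeSet.mp h.1).ne
          rcases lt_or_gt_of_ne hne with hlt | hgt
          · exact ⟨(a, b), Finset.mem_filter.mpr
              ⟨Finset.mem_univ _, hlt, Finset.mem_union.mp he⟩, rfl⟩
          · refine ⟨(b, a), Finset.mem_filter.mpr
              ⟨Finset.mem_univ _, hgt, ?_⟩, Sym2.eq_swap⟩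
            rw [Sym2.eq_swap]
            exact Finset.mem_union.mp he
    set goodZ : Fin n → Fin n → Finset (Finset (Fin n)) := fun u v =>
      Finset.univ.filter (fun Z => u ∉ Z ∧ v ∉ Z ∧ ¬ (DSep D u v Z ↔ DSep D'' u v Z))
      with hgoodZ
    have hgood : ∀ a ∈ Pf, 2 ^ (n - 3) ≤ (goodZ a.1 a.2).card := by
      intro a ha
      rw [hPf, Finset.mem_filter] at ha
      have hncard : ∀ u v : Fin n, Set.ncard {Z : Finset (Fin n) |
          u ∉ Z ∧ v ∉ Z ∧ ¬ (DSep D u v Z ↔ DSep D'' u v Z)} = (goodZ u v).card := by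
        intro u v
        have : {Z : Finset (Fin n) | u ∉ Z ∧ v ∉ Z ∧ ¬ (DSep D u v Z ↔ DSep D'' u v Z)} =
            ↑(goodZ u v) := by
          ext Z
          simp [hgoodZ]
        rw [this, Set.ncard_coe_finset]
      rcases ha.2.2 with h1 | h1
      · rw [hE1f, Set.Finite.mem_toFinset, hE1s] at h1
        have hb := pair_bound hn hD'' hs'' ((Skel D).mem_edgeSet.mp h1.1)
          (fun h => h1.2 ((Skel D'').mem_edgeSet.mpr h))
        rw [hncard a.1 a.2] at hb
        exact hb
      · rw [hE2f, Set.Finite.mem_toFinset, hE2s] at h1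
        have hb := pair_bound hn hD hs ((Skel D'').mem_edgeSet.mp h1.1)
          (fun h => h1.2 ((Skel D).mem_edgeSet.mpr h))
        have hswap : {Z : Finset (Fin n) | a.1 ∉ Z ∧ a.2 ∉ Z ∧
            ¬ (DSep D'' a.1 a.2 Z ↔ DSep D a.1 a.2 Z)} =
            {Z : Finset (Fin n) | a.1 ∉ Z ∧ a.2 ∉ Z ∧
            ¬ (DSep D a.1 a.2 Z ↔ DSep D'' a.1 a.2 Z)} := by
          ext Z
          simp only [Set.mem_setOf_eq]
          tauto
        rw [hswap, hncard a.1 a.2] at hb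
        exact hb
    set T := Pf.biUnion (fun a => {a.1} ×ˢ ({a.2} ×ˢ goodZ a.1 a.2)) with hT
    have hdisj2 : ∀ x ∈ Pf, ∀ y ∈ Pf, x ≠ y →
        _root_.Disjoint ({x.1} ×ˢ ({x.2} ×ˢ goodZ x.1 x.2)) ({y.1} ×ˢ ({y.2} ×ˢ goodZ y.1 y.2)) := by
      intro x _ y _ hxy
      rw [Finset.disjoint_left]
      intro t ht1 ht2
      simp only [Finset.mem_product, Finset.mem_singleton] at ht1 ht2
      exact hxy (Prod.ext (ht1.1.symm.trans ht2.1) (ht1.2.1.symm.trans ht2.2.1))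
    have hTcard : Pf.card * 2 ^ (n - 3) ≤ T.card := by
      rw [hT, Finset.card_biUnion hdisj2]
      calc Pf.card * 2 ^ (n - 3) = ∑ _a ∈ Pf, 2 ^ (n - 3) := by
            rw [Finset.sum_const, smul_eq_mul]
      _ ≤ ∑ a ∈ Pf, ({a.1} ×ˢ ({a.2} ×ˢ goodZ a.1 a.2)).card := by
            apply Finset.sum_le_sum
            intro a ha
            have := hgood a ha
            simp only [Finset.card_product, Finset.card_singleton, one_mul]
            exact this
    have hTsub : T ⊆ hSfin.toFinset := by
      intro t ht
      obtain ⟨a, ha, hta⟩ := Finset.mem_biUnion.mp ht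
      rw [hPf, Finset.mem_filter] at ha
      simp only [Finset.mem_product, Finset.mem_singleton] at hta
      obtain ⟨h1, h2, h3⟩ := hta
      rw [hgoodZ] at h3
      simp only [Finset.mem_filter, Finset.mem_univ, true_and] at h3
      rw [Set.Finite.mem_toFinset]
      refine ⟨?_, ?_, ?_, ?_⟩
      · rw [h1, h2]; exact ha.2.1
      · rw [h1]; exact h3.1
      · rw [h2]; exact h3.2.1
      · rw [h1, h2]; exact h3.2.2
    have hfinal : dSepDist D D'' = hSfin.toFinset.card := by
      rw [dSepDist]
      exact Set.ncard_eq_toFinset_card _ hSfin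
    rw [hfinal]
    have hE1ncard : E1s.ncard = E1f.card := Set.ncard_eq_toFinset_card _ _
    calc 2 * E1s.ncard * 2 ^ (n - 3) = Pf.card * 2 ^ (n - 3) := by
          rw [hPfcard, ← hcardeq, hE1ncard]; ring
    _ ≤ T.card := hTcard
    _ ≤ hSfin.toFinset.card := Finset.card_le_card hTsub
end
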